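/- arXiv:1909.02078 — 3 statements merged into one kernel-verified Lean document; each statement's English description precedes it below -/
import Mathlib

section
/- Let 𝒞 be a ℂ-linear subspace of the functions D → ℂ invariant under complex conjugation. Then 𝒞 is complex conjugate phase retrieval if and only if there do not exist u, v ∈ 𝒞 such that Re(u(x)·conj(v(x))) = 0 for all x ∈ D and Re(u(x)·conj(v(y)) + u(y)·conj(v(x))) ≠ 0 for some x, y ∈ D. -/
open Complex ComplexConjugate

private lemma two_options (w₁ w₂ : ℂ) (h1 : w₁.re = w₂.re)
    (h2 : ‖w₁‖ = ‖w₂‖) : w₁ = w₂ ∨ w₁ = conj w₂ := by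
  have h3 : Complex.normSq w₁ = Complex.normSq w₂ := by
    rw [← Complex.sq_norm, ← Complex.sq_norm, h2]
  simp [Complex.normSq_apply] at h3
  rw [h1] at h3
  have hsq : w₁.im ^ 2 = w₂.im ^ 2 := by nlinarith [h3]
  rcases sq_eq_sq_iff_eq_or_eq_neg.mp hsq with h | h
  · left; exact Complex.ext h1 h
  · right; exact Complex.ext (by simpa using h1) (by simpa using h)

private lemma key_id (a b c d : ℂ) :
    ((a + b) * conj (c - d) + (c + d) * conj (a - b)).re
      = 2 * ((a * conj c).re - (b * conj d).re) := by
  simp [Complex.mul_re, Complex.add_re, Complex.add_im, Complex.sub_re, Complex.sub_im,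
    Complex.conj_re, Complex.conj_im]
  ring

private lemma helper1 (z a b : ℂ) (hz : z * conj z = 1) :
    ((a + z * a) * conj (b - z * b) + (b + z * b) * conj (a - z * a)).re = 0 := by
  have h : (a + z * a) * conj (b - z * b) + (b + z * b) * conj (a - z * a)
      = (z - conj z) * (a * conj b + b * conj a) := by
    simp only [map_sub, map_mul, map_add]
    linear_combination (-(a * conj b) - b * conj a) * hz
  rw [h, Complex.mul_re]
  have e1 : (z - conj z).re = 0 := by simp
  have e2 : (a * conj b + b * conj a).im = 0 := by
    simp [Complex.add_im, Complex.mul_im, Complex.conj_re, Complex.conj_im]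
    ring
  rw [e1, e2]
  ring

private lemma helper2 (z a b : ℂ) (hz : z * conj z = 1) :
    ((a + z * conj a) * conj (b - z * conj b)
      + (b + z * conj b) * conj (a - z * conj a)).re = 0 := by
  have h : (a + z * conj a) * conj (b - z * conj b)
      + (b + z * conj b) * conj (a - z * conj a)
      = 2 * (z * conj a * conj b) - 2 * (conj z * a * b) := by
    simp only [map_sub, map_mul, map_add, Complex.conj_conj]
    linear_combination (-(a * conj b) - conj a * b) * hz
  rw [h]
  simp [Complex.mul_re, Complex.mul_im, Complex.sub_re, Complex.sub_im,
    Complex.conj_re, Complex.conj_im]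
  ring

private lemma abs_add_sub {a b : ℂ} (h : (a * conj b).re = 0) :
    ‖a - b‖ = ‖a + b‖ := by
  rw [Complex.norm_def, Complex.norm_def]
  congr 1
  simp [Complex.mul_re, Complex.conj_re, Complex.conj_im] at h
  simp [Complex.normSq_apply, Complex.add_re, Complex.add_im, Complex.sub_re, Complex.sub_im]
  nlinarith [h]

private lemma ptw_re_zero {a b : ℂ} (h : ‖b‖ = ‖a‖) :
    ((a + b) * conj (a - b)).re = 0 := by
  have h2 : Complex.normSq b = Complex.normSq a := by
    rw [← Complex.sq_norm, ← Complex.sq_norm, h]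
  simp [Complex.normSq_apply] at h2
  simp [Complex.mul_re, Complex.add_re, Complex.add_im, Complex.sub_re, Complex.sub_im,
    Complex.conj_re, Complex.conj_im]
  nlinarith [h2]

private lemma mulconj_eq {a b : ℂ} (h : ‖b‖ = ‖a‖) :
    b * conj b = a * conj a := by
  rw [Complex.mul_conj, Complex.mul_conj]
  norm_cast
  rw [← Complex.sq_norm, ← Complex.sq_norm, h]

private lemma conj_ne_zero' {a : ℂ} (h : a ≠ 0) : conj a ≠ 0 := by
  simpa using h

private lemma ne_zero_of_abs_eq {a b : ℂ} (h : ‖b‖ = ‖a‖) (ha : a ≠ 0) :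
    b ≠ 0 := by
  intro h0
  rw [h0, norm_zero] at h
  exact ha (by simpa using h.symm)

private lemma recover {D : Type*} (f g : D → ℂ)
    (habs : ∀ x, ‖g x‖ = ‖f x‖)
    (hre : ∀ x y, (g x * conj (g y)).re = (f x * conj (f y)).re) :
    (∃ z : ℂ, ‖z‖ = 1 ∧ g = fun x => z * f x) ∨
    (∃ z : ℂ, ‖z‖ = 1 ∧ g = fun x => z * conj (f x)) := by
  have hzero : ∀ x, f x = 0 → g x = 0 := by
    intro x h
    have := habs x
    rw [h] at this
    simpa using this
  have hN : ∀ x, g x * conj (g x) = f x * conj (f x) := fun x => mulconj_eq (habs x)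
  have hopt : ∀ x y, g x * conj (g y) = f x * conj (f y) ∨
      g x * conj (g y) = conj (f x) * f y := by
    intro x y
    rcases two_options (g x * conj (g y)) (f x * conj (f y)) (hre x y)
        (by simp [map_mul, Complex.norm_conj, habs]) with h | h
    · exact Or.inl h
    · right
      rw [h]
      simp [map_mul, Complex.conj_conj]
  by_cases hf0 : ∀ x, f x = 0
  · left
    exact ⟨1, by simp, funext fun x => by simp [hzero x (hf0 x), hf0 x]⟩
  push_neg at hf0
  by_cases h1 : ∀ x y, g x * conj (g y) = f x * conj (f y)
  · -- g = z f
    obtain ⟨a, ha⟩ := hf0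
    have hga : g a ≠ 0 := ne_zero_of_abs_eq (habs a) ha
    left
    refine ⟨conj (f a) / conj (g a), ?_, funext fun x => ?_⟩
    · rw [norm_div]
      simp [Complex.norm_conj, habs a]
      exact ha
    · have h := h1 x a
      have hcga : conj (g a) ≠ 0 := conj_ne_zero' hga
      field_simp
      linear_combination h
  · -- not all opt1 : show g = z conj f
    push_neg at h1
    obtain ⟨p, q, hpq⟩ := h1
    have h2pq : g p * conj (g q) = conj (f p) * f q := (hopt p q).resolve_left hpq
    have hfp : f p ≠ 0 := by
      intro h
      exact hpq (by simp [hzero p h, h])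
    have hfq : f q ≠ 0 := by
      intro h
      exact hpq (by simp [hzero q h, h])
    have hgp : g p ≠ 0 := ne_zero_of_abs_eq (habs p) hfp
    have hgq : g q ≠ 0 := ne_zero_of_abs_eq (habs q) hfq
    -- Claim A: ∀ x, g x * conj (g p) = conj (f x) * f p
    have claimA : ∀ x, g x * conj (g p) = conj (f x) * f p := by
      intro x
      rcases hopt x p with hxp | hxp
      · -- opt1(x,p); analyze pair (x,q)
        by_cases hfx : f x = 0
        · simp [hzero x hfx, hfx]
        have hgx : g x ≠ 0 := ne_zero_of_abs_eq (habs x) hfx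
        rcases hopt x q with hxq | hxq
        · -- opt1(x,q) too: contradiction with hpq
          exfalso
          apply hpq
          have hc : conj (g x) * g p = conj (f x) * f p := by
            have := congrArg conj hxp
            simpa [map_mul, Complex.conj_conj, mul_comm] using this
          have hmul : (f x * conj (f x)) * (g p * conj (g q))
              = (f x * conj (f x)) * (f p * conj (f q)) := by
            calc (f x * conj (f x)) * (g p * conj (g q))
                = (conj (g x) * g p) * (g x * conj (g q)) := by
                  rw [← hN x]; ring
              _ = (conj (f x) * f p) * (f x * conj (f q)) := by rw [hc, hxq]
              _ = (f x * conj (f x)) * (f p * conj (f q)) := by ring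
          exact mul_left_cancel₀ (mul_ne_zero hfx (conj_ne_zero' hfx)) hmul
        · -- opt2(x,q) and opt2(p,q) give opt2(x,p)
          have hcpq : conj (g p) * g q = f p * conj (f q) := by
            have := congrArg conj h2pq
            simpa [map_mul, Complex.conj_conj, mul_comm] using this
          have hmul : (f q * conj (f q)) * (g x * conj (g p))
              = (f q * conj (f q)) * (conj (f x) * f p) := by
            calc (f q * conj (f q)) * (g x * conj (g p))
                = (g x * conj (g q)) * (conj (g p) * g q) := by
                  rw [← hN q]; ring
              _ = (conj (f x) * f q) * (f p * conj (f q)) := by rw [hxq, hcpq]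
              _ = (f q * conj (f q)) * (conj (f x) * f p) := by ring
          exact mul_left_cancel₀ (mul_ne_zero hfq (conj_ne_zero' hfq)) hmul
      · exact hxp
    right
    refine ⟨f p / conj (g p), ?_, funext fun x => ?_⟩
    · rw [norm_div]
      simp [Complex.norm_conj, habs p]
      exact hfp
    · have h := claimA x
      have hcgp : conj (g p) ≠ 0 := conj_ne_zero' hgp
      field_simp
      linear_combination h
/-- **Theorem 2.2 (complex conjugate phase retrieval of the space).**
Let `C` be a ℂ-linear subspace of functions `D → ℂ` invariant under complex conjugation.
Then `C` is complex conjugate phase retrieval if and only if there do not exist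
`u, v ∈ C` with `Re (u x * conj (v x)) = 0` for all `x` and
`Re (u x * conj (v y) + u y * conj (v x)) ≠ 0` for some `x, y`. -/
theorem stmt_1 {D : Type*} [Nonempty D] (C : Submodule ℂ (D → ℂ))
    (hconj : ∀ f ∈ C, (fun x => (starRingEnd ℂ) (f x)) ∈ C) :
    (∀ f ∈ C,
      {g : D → ℂ | g ∈ C ∧ ∀ x, ‖g x‖ = ‖f x‖} =
        {g : D → ℂ | ∃ z : ℂ, ‖z‖ = 1 ∧ g = fun x => z * f x} ∪
        {g : D → ℂ | ∃ z : ℂ, ‖z‖ = 1 ∧ g = fun x => z * (starRingEnd ℂ) (f x)}) ↔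
      ¬ ∃ u ∈ C, ∃ v ∈ C,
          (∀ x, (u x * (starRingEnd ℂ) (v x)).re = 0) ∧
          (∃ x y, (u x * (starRingEnd ℂ) (v y) + u y * (starRingEnd ℂ) (v x)).re ≠ 0) := by
  constructor
  · -- CCPR → no bad pair
    intro hccpr
    rintro ⟨u, hu, v, hv, hptw, x, y, hxy⟩
    apply hxy
    set F : D → ℂ := u + v with hF
    set G : D → ℂ := u - v with hG
    have hFmem : F ∈ C := C.add_mem hu hv
    have hGmem : G ∈ C := C.sub_mem hu hv
    have habs : ∀ t, ‖G t‖ = ‖F t‖ := by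
      intro t
      have : G t = u t - v t := rfl
      rw [this, show F t = u t + v t from rfl]
      exact abs_add_sub (hptw t)
    have hmem : G ∈ {g : D → ℂ | g ∈ C ∧ ∀ t, ‖g t‖ = ‖F t‖} :=
      ⟨hGmem, habs⟩
    rw [hccpr F hFmem] at hmem
    have hz2 : ∀ z : ℂ, ‖z‖ = 1 → z * conj z = 1 := by
      intro z hz
      rw [Complex.mul_conj]
      norm_cast
      rw [← Complex.sq_norm, hz]
      norm_num
    have e1 : ∀ t, (2 : ℂ) * u t = F t + G t := by
      intro t
      show (2 : ℂ) * u t = (u t + v t) + (u t - v t)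
      ring
    have e2 : ∀ t, (2 : ℂ) * v t = F t - G t := by
      intro t
      show (2 : ℂ) * v t = (u t + v t) - (u t - v t)
      ring
    have key : ((F x + G x) * conj (F y - G y) + (F y + G y) * conj (F x - G x)).re = 0 := by
      rcases hmem with ⟨z, hz, hG'⟩ | ⟨z, hz, hG'⟩
      · have : ∀ t, G t = z * F t := fun t => congrFun hG' t
        rw [this x, this y]
        exact helper1 z (F x) (F y) (hz2 z hz)
      · have : ∀ t, G t = z * conj (F t) := fun t => congrFun hG' t
        rw [this x, this y]
        exact helper2 z (F x) (F y) (hz2 z hz)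
    have h4 : (F x + G x) * conj (F y - G y) + (F y + G y) * conj (F x - G x)
        = 4 * (u x * conj (v y) + u y * conj (v x)) := by
      rw [← e1 x, ← e2 y, ← e1 y, ← e2 x]
      simp only [map_mul, map_ofNat]
      ring
    rw [h4] at key
    have : ((4 : ℂ) * (u x * conj (v y) + u y * conj (v x))).re
        = 4 * (u x * conj (v y) + u y * conj (v x)).re := by
      simp [Complex.mul_re]
    rw [this] at key
    linarith
  · -- no bad pair → CCPR
    intro h f hf
    ext g
    simp only [Set.mem_setOf_eq, Set.mem_union]
    constructor
    · rintro ⟨hg, habs⟩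
      push_neg at h
      have hall := h (f + g) (C.add_mem hf hg) (f - g) (C.sub_mem hf hg)
        (fun t => ptw_re_zero (habs t))
      have hre : ∀ x y, (g x * conj (g y)).re = (f x * conj (f y)).re := by
        intro x y
        have hk := key_id (f x) (g x) (f y) (g y)
        have hxy := hall x y
        have e : (f + g) x * conj ((f - g) y) + (f + g) y * conj ((f - g) x)
            = (f x + g x) * conj (f y - g y) + (f y + g y) * conj (f x - g x) := rfl
        rw [e] at hxy
        rw [hxy] at hk
        linarith
      exact recover f g habs hre
    · rintro (⟨z, hz, rfl⟩ | ⟨z, hz, rfl⟩)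
      · refine ⟨?_, fun x => by simp [map_mul, hz]⟩
        exact C.smul_mem z hf
      · refine ⟨?_, fun x => by simp [map_mul, hz, Complex.norm_conj]⟩
        exact C.smul_mem z (hconj f hf)
end

section
/- Let A be a real m×n matrix of rank n with rows a₁ᵀ, …, a_mᵀ. Then the complex range space R_ℂ(A) is complex conjugate phase retrieval if and only if there does not exist a real n×n matrix X of rank at most 2 such that Xᵀ ≠ −X and Tr(a_i a_iᵀ X) = a_iᵀ X a_i = 0 for all 1 ≤ i ≤ m. -/
open Complex Matrix Finset

lemma sum_two {M : Type*} [AddCommMonoid M] [Module ℝ M] {k : ℕ} (hk : k ≤ 2)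
    (e : Fin k → M) (f : Fin k → ℝ) :
    ∃ c d : ℝ, ∑ i, f i • e i
      = c • (if h : 0 < k then e ⟨0, h⟩ else 0) + d • (if h : 1 < k then e ⟨1, h⟩ else 0) := by
  interval_cases k
  · exact ⟨0, 0, by simp⟩
  · exact ⟨f 0, 0, by simp⟩
  · exact ⟨f 0, f 1, by simp [Fin.sum_univ_two]⟩

lemma span_le_two {n : ℕ} (V : Submodule ℝ (Fin n → ℝ)) (h : Module.finrank ℝ V ≤ 2) :
    ∃ p r : Fin n → ℝ, ∀ v ∈ V, ∃ c d : ℝ, v = c • p + d • r := by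
  have : FiniteDimensional ℝ V := inferInstance
  set k := Module.finrank ℝ V with hkdef
  let b : Module.Basis (Fin k) ℝ V := Module.finBasis ℝ V
  refine ⟨(if h : 0 < k then (b ⟨0, h⟩ : Fin n → ℝ) else 0),
      (if h : 1 < k then (b ⟨1, h⟩ : Fin n → ℝ) else 0), ?_⟩
  intro v hv
  obtain ⟨c, d, hcd⟩ := sum_two h (fun i => (b i : Fin n → ℝ)) (fun i => b.repr ⟨v, hv⟩ i)
  refine ⟨c, d, ?_⟩
  rw [← hcd]
  have := b.sum_repr ⟨v, hv⟩
  calc v = ((⟨v, hv⟩ : V) : Fin n → ℝ) := rfl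
    _ = ((∑ i, b.repr ⟨v, hv⟩ i • b i : V) : Fin n → ℝ) := by rw [this]
    _ = ∑ i, b.repr ⟨v, hv⟩ i • (b i : Fin n → ℝ) := by
        simp only [Submodule.coe_sum, Submodule.coe_smul]

lemma decomp {n : ℕ} (X : Matrix (Fin n) (Fin n) ℝ) (h : X.rank ≤ 2) :
    ∃ p q r s : Fin n → ℝ, ∀ i j, X i j = p i * q j + r i * s j := by
  have hfin : Module.finrank ℝ (LinearMap.range X.mulVecLin) ≤ 2 := h
  obtain ⟨p, r, hpr⟩ := span_le_two _ hfin
  have hcol : ∀ j, (fun i => X i j) ∈ LinearMap.range X.mulVecLin := by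
    intro j
    exact ⟨Pi.single j 1, by simp [Matrix.mulVecLin_apply]; rfl⟩
  choose c d hcd using fun j => hpr _ (hcol j)
  refine ⟨p, c, r, d, ?_⟩
  intro i j
  have := congrFun (hcd j) i
  simpa [mul_comm] using this


lemma sum_form {n : ℕ} (a c d : Fin n → ℝ) :
    ∑ j, (a j : ℂ) * ((c j : ℝ) + (d j : ℝ) * I)
      = ((∑ j, a j * c j : ℝ) : ℂ) + ((∑ j, a j * d j : ℝ) : ℂ) * I := by
  push_cast
  rw [Finset.sum_mul, ← Finset.sum_add_distrib]
  congr 1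
  ext j
  ring

lemma bridge {n : ℕ} (p q r s a : Fin n → ℝ) :
    normSq (∑ j, (a j : ℂ) * (((p j + q j)/2 : ℝ) + ((r j + s j)/2 : ℝ) * I)) -
      normSq (∑ j, (a j : ℂ) * (((p j - q j)/2 : ℝ) + ((r j - s j)/2 : ℝ) * I))
      = (∑ j, a j * p j) * (∑ j, a j * q j) + (∑ j, a j * r j) * (∑ j, a j * s j) := by
  rw [sum_form, sum_form, normSq_add_mul_I, normSq_add_mul_I]
  have e1 : ∑ j, a j * ((p j + q j)/2) = ((∑ j, a j * p j) + ∑ j, a j * q j)/2 := by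
    rw [← Finset.sum_add_distrib, Finset.sum_div]; congr 1; ext j; ring
  have e2 : ∑ j, a j * ((r j + s j)/2) = ((∑ j, a j * r j) + ∑ j, a j * s j)/2 := by
    rw [← Finset.sum_add_distrib, Finset.sum_div]; congr 1; ext j; ring
  have e3 : ∑ j, a j * ((p j - q j)/2) = ((∑ j, a j * p j) - ∑ j, a j * q j)/2 := by
    rw [← Finset.sum_sub_distrib, Finset.sum_div]; congr 1; ext j; ring
  have e4 : ∑ j, a j * ((r j - s j)/2) = ((∑ j, a j * r j) - ∑ j, a j * s j)/2 := by
    rw [← Finset.sum_sub_distrib, Finset.sum_div]; congr 1; ext j; ring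
  rw [e1, e2, e3, e4]
  ring

lemma quad {n : ℕ} (p q r s a : Fin n → ℝ) (X : Matrix (Fin n) (Fin n) ℝ)
    (hX : ∀ i j, X i j = p i * q j + r i * s j) :
    a ⬝ᵥ X.mulVec a
      = (∑ j, a j * p j) * (∑ j, a j * q j) + (∑ j, a j * r j) * (∑ j, a j * s j) := by
  simp only [dotProduct, Matrix.mulVec, hX]
  rw [Finset.sum_mul_sum, Finset.sum_mul_sum, ← Finset.sum_add_distrib]
  congr 1
  ext j
  rw [Finset.mul_sum, ← Finset.sum_add_distrib]
  congr 1
  ext k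
  ring


lemma reflect_aux (α β : ℂ) (h1 : normSq β = normSq α) (h2 : β.re = α.re) :
    β = α ∨ β = (starRingEnd ℂ) α := by
  have h1' : β.re * β.re + β.im * β.im = α.re * α.re + α.im * α.im := by
    simpa [normSq_apply] using h1
  have hre : β.re * β.re = α.re * α.re := by rw [h2]
  have him : (β.im - α.im) * (β.im + α.im) = 0 := by nlinarith
  rcases mul_eq_zero.mp him with h | h
  · left; exact Complex.ext h2 (by linarith)
  · right; exact Complex.ext (by simpa using h2) (by simp; linarith)

lemma single_sum {n : ℕ} (j : Fin n) (w : Fin n → ℂ) :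
    ∑ i, ((Pi.single j 1 : Fin n → ℝ) i : ℂ) * w i = w j := by
  rw [Finset.sum_eq_single j]
  · simp
  · intro i _ hij; simp [Pi.single_apply, hij]
  · simp

lemma pair_sum {n : ℕ} {j l : Fin n} (hjl : j ≠ l) (w : Fin n → ℂ) :
    ∑ i, (((Pi.single j 1 + Pi.single l 1 : Fin n → ℝ)) i : ℂ) * w i = w j + w l := by
  have : ∀ i, (((Pi.single j 1 + Pi.single l 1 : Fin n → ℝ)) i : ℂ) * w i
      = ((Pi.single j 1 : Fin n → ℝ) i : ℂ) * w i + ((Pi.single l 1 : Fin n → ℝ) i : ℂ) * w i := by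
    intro i; push_cast [Pi.add_apply]; ring
  rw [Finset.sum_congr rfl (fun i _ => this i), Finset.sum_add_distrib, single_sum, single_sum]

lemma core {n : ℕ} (x y : Fin n → ℂ)
    (h : ∀ a : Fin n → ℝ, normSq (∑ j, (a j : ℂ) * y j) = normSq (∑ j, (a j : ℂ) * x j)) :
    ∃ z : ℂ, ‖z‖ = 1 ∧ (y = z • x ∨ y = z • star x) := by
  have hsingle : ∀ j, normSq (y j) = normSq (x j) := by
    intro j
    have := h (Pi.single j 1)
    rwa [single_sum, single_sum] at this
  have hpair : ∀ j l, (y j * (starRingEnd ℂ) (y l)).re = (x j * (starRingEnd ℂ) (x l)).re := by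
    intro j l
    rcases eq_or_ne j l with rfl | hjl
    · simp [Complex.mul_conj, hsingle j]
    · have := h (Pi.single j 1 + Pi.single l 1)
      rw [pair_sum hjl, pair_sum hjl, normSq_add, normSq_add] at this
      have h1 := hsingle j
      have h2 := hsingle l
      linarith
  by_cases hx : ∀ j, x j = 0
  · refine ⟨1, by simp, Or.inl ?_⟩
    funext j
    have : normSq (y j) = 0 := by rw [hsingle j, hx j]; simp
    simp [normSq_eq_zero.mp this, hx j]
  · push_neg at hx
    obtain ⟨k, hk⟩ := hx
    have hyk : y k ≠ 0 := by
      intro h0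
      have := hsingle k
      rw [h0] at this
      simp only [normSq_zero] at this
      exact hk (normSq_eq_zero.mp this.symm)
    have hck : (starRingEnd ℂ) (y k) ≠ 0 := by simpa using hyk
    have hdich : ∀ j, y j * (starRingEnd ℂ) (y k) = x j * (starRingEnd ℂ) (x k) ∨
        y j * (starRingEnd ℂ) (y k) = (starRingEnd ℂ) (x j) * x k := by
      intro j
      have h1 : normSq (y j * (starRingEnd ℂ) (y k)) = normSq (x j * (starRingEnd ℂ) (x k)) := by
        simp [normSq_conj, hsingle]
      have h2 := hpair j k
      rcases reflect_aux _ _ h1 h2 with h | h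
      · exact Or.inl h
      · right; rw [h, _root_.map_mul, Complex.conj_conj]
    have habsk : ‖x k‖ = ‖y k‖ := by
      have := hsingle k
      rw [← Complex.sq_norm, ← Complex.sq_norm] at this
      have h1 := norm_nonneg (x k)
      have h2 := norm_nonneg (y k)
      nlinarith
    by_cases hall : ∀ j, y j * (starRingEnd ℂ) (y k) = x j * (starRingEnd ℂ) (x k)
    · refine ⟨(starRingEnd ℂ) (x k) / (starRingEnd ℂ) (y k), ?_, Or.inl ?_⟩
      · rw [norm_div, Complex.norm_conj, Complex.norm_conj, habsk, div_self]
        exact norm_ne_zero_iff.mpr hyk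
      · funext j
        have := hall j
        simp only [Pi.smul_apply, smul_eq_mul]
        field_simp
        linear_combination this
    · push_neg at hall
      obtain ⟨j₀, hj₀⟩ := hall
      have hj₀' : y j₀ * (starRingEnd ℂ) (y k) = (starRingEnd ℂ) (x j₀) * x k :=
        (hdich j₀).resolve_left hj₀
      have himj₀ : (x j₀ * (starRingEnd ℂ) (x k)).im ≠ 0 := by
        intro h0
        apply hj₀
        rw [hj₀', ← Complex.conj_eq_iff_im.mpr h0, _root_.map_mul, Complex.conj_conj]
      have hall' : ∀ l, y l * (starRingEnd ℂ) (y k) = (starRingEnd ℂ) (x l) * x k := by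
        intro l
        rcases hdich l with hl | hl
        · by_cases hreal : (x l * (starRingEnd ℂ) (x k)).im = 0
          · rw [hl, ← Complex.conj_eq_iff_im.mpr hreal, _root_.map_mul, Complex.conj_conj]
          · exfalso
            have lhs1 : (y j₀ * (starRingEnd ℂ) (y k)) * (starRingEnd ℂ) (y l * (starRingEnd ℂ) (y k))
                = (y j₀ * (starRingEnd ℂ) (y l)) * ((normSq (y k) : ℝ) : ℂ) := by
              rw [_root_.map_mul, Complex.conj_conj]
              linear_combination (y j₀ * (starRingEnd ℂ) (y l)) * Complex.mul_conj (y k)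
            have lhs2 : (x j₀ * (starRingEnd ℂ) (x k)) * (starRingEnd ℂ) (x l * (starRingEnd ℂ) (x k))
                = (x j₀ * (starRingEnd ℂ) (x l)) * ((normSq (x k) : ℝ) : ℂ) := by
              rw [_root_.map_mul, Complex.conj_conj]
              linear_combination (x j₀ * (starRingEnd ℂ) (x l)) * Complex.mul_conj (x k)
            have c1 : (((starRingEnd ℂ) (x j₀) * x k) * (starRingEnd ℂ) (x l * (starRingEnd ℂ) (x k))).re
                = (y j₀ * (starRingEnd ℂ) (y l)).re * normSq (y k) := by
              rw [← hj₀', ← hl, lhs1]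
              simp [Complex.mul_re]
            have c2 : ((x j₀ * (starRingEnd ℂ) (x k)) * (starRingEnd ℂ) (x l * (starRingEnd ℂ) (x k))).re
                = (x j₀ * (starRingEnd ℂ) (x l)).re * normSq (x k) := by
              rw [lhs2]
              simp [Complex.mul_re]
            have c3 : (y j₀ * (starRingEnd ℂ) (y l)).re = (x j₀ * (starRingEnd ℂ) (x l)).re :=
              hpair j₀ l
            have key : (((starRingEnd ℂ) (x j₀) * x k) * (starRingEnd ℂ) (x l * (starRingEnd ℂ) (x k))).re
                = ((x j₀ * (starRingEnd ℂ) (x k)) * (starRingEnd ℂ) (x l * (starRingEnd ℂ) (x k))).re := by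
              rw [c1, c2, c3, hsingle k]
            have hca : (starRingEnd ℂ) (x j₀) * x k
                = (starRingEnd ℂ) (x j₀ * (starRingEnd ℂ) (x k)) := by
              rw [_root_.map_mul, Complex.conj_conj]
            rw [hca, ← _root_.map_mul] at key
            set α := x j₀ * (starRingEnd ℂ) (x k) with hα
            set β := x l * (starRingEnd ℂ) (x k) with hβ
            have key2 : (α * β).re = (α * (starRingEnd ℂ) β).re := by
              rw [← key]; simp
            simp only [Complex.mul_re, Complex.conj_re, Complex.conj_im] at key2
            have : α.im * β.im = 0 := by linarith
            rcases mul_eq_zero.mp this with h | h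
            · exact himj₀ h
            · exact hreal h
        · exact hl
      refine ⟨x k / (starRingEnd ℂ) (y k), ?_, Or.inr ?_⟩
      · rw [norm_div, Complex.norm_conj, habsk, div_self]
        exact norm_ne_zero_iff.mpr hyk
      · funext j
        have := hall' j
        simp only [Pi.smul_apply, Pi.star_apply, smul_eq_mul, Complex.star_def]
        field_simp
        linear_combination this


lemma mulVec_map_re {m n : ℕ} (A : Matrix (Fin m) (Fin n) ℝ) (v : Fin n → ℂ) (i : Fin m) :
    ((A.map (Complex.ofReal)).mulVec v i).re = A.mulVec (fun j => (v j).re) i := by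
  simp [Matrix.mulVec, dotProduct, Matrix.map_apply, Complex.re_sum]

lemma mulVec_map_im {m n : ℕ} (A : Matrix (Fin m) (Fin n) ℝ) (v : Fin n → ℂ) (i : Fin m) :
    ((A.map (Complex.ofReal)).mulVec v i).im = A.mulVec (fun j => (v j).im) i := by
  simp [Matrix.mulVec, dotProduct, Matrix.map_apply, Complex.im_sum]

lemma inj_of_rank {m n : ℕ} (A : Matrix (Fin m) (Fin n) ℝ) (hA : A.rank = n) :
    Function.Injective fun v : Fin n → ℂ => (A.map (Complex.ofReal)).mulVec v := by
  have hreal : Function.Injective A.mulVec := by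
    have h1 := LinearMap.finrank_range_add_finrank_ker A.mulVecLin
    rw [Module.finrank_pi] at h1
    have hr : Module.finrank ℝ (LinearMap.range A.mulVecLin) = n := hA
    have hker : Module.finrank ℝ (LinearMap.ker A.mulVecLin) = 0 := by
      rw [hr] at h1; simpa [Fintype.card_fin] using h1
    have : LinearMap.ker A.mulVecLin = ⊥ := Submodule.finrank_eq_zero.mp hker
    have := LinearMap.ker_eq_bot.mp this
    intro u v huv
    exact this (by simpa [Matrix.mulVecLin_apply] using huv)
  intro u v huv
  simp only at huv
  funext j
  have hre : A.mulVec (fun j => (u j).re) = A.mulVec (fun j => (v j).re) := by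
    funext i
    rw [← mulVec_map_re, ← mulVec_map_re, huv]
  have him : A.mulVec (fun j => (u j).im) = A.mulVec (fun j => (v j).im) := by
    funext i
    rw [← mulVec_map_im, ← mulVec_map_im, huv]
  have h1 := congrFun (hreal hre) j
  have h2 := congrFun (hreal him) j
  exact Complex.ext h1 h2

lemma rank_outer_le {n : ℕ} (p q r s : Fin n → ℝ) :
    (Matrix.of fun i j => p i * q j + r i * s j : Matrix (Fin n) (Fin n) ℝ).rank ≤ 2 := by
  have heq : (Matrix.of fun i j => p i * q j + r i * s j : Matrix (Fin n) (Fin n) ℝ)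
      = (Matrix.of fun i (t : Fin 2) => if t = 0 then p i else r i) *
        (Matrix.of fun (t : Fin 2) j => if t = 0 then q j else s j) := by
    ext i j
    simp [Matrix.mul_apply, Fin.sum_univ_two]
  rw [heq]
  exact le_trans (Matrix.rank_mul_le_left _ _)
    (le_trans (Matrix.rank_le_card_width _) (by simp))

lemma re_form (a b c d : ℝ) :
    ((((a : ℝ) : ℂ) + ((b : ℝ) : ℂ) * I) * (starRingEnd ℂ) (((c : ℝ) : ℂ) + ((d : ℝ) : ℂ) * I)).re
      = a * c + b * d := by
  simp [Complex.mul_re]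

-- symmetric-part scalar identity
lemma sym_id (pi qi ri si pj qj rj sj : ℝ) :
    (pi * qj + ri * sj) + (pj * qi + rj * si)
      = 2 * (((((pi + qi)/2 : ℝ) + ((ri + si)/2 : ℝ) * I) *
          (starRingEnd ℂ) (((pj + qj)/2 : ℝ) + ((rj + sj)/2 : ℝ) * I)).re -
        ((((pi - qi)/2 : ℝ) + ((ri - si)/2 : ℝ) * I) *
          (starRingEnd ℂ) (((pj - qj)/2 : ℝ) + ((rj - sj)/2 : ℝ) * I)).re) := by
  rw [re_form, re_form]
  ring

lemma dot_symm {n : ℕ} (a : Fin n → ℝ) (X : Matrix (Fin n) (Fin n) ℝ) :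
    a ⬝ᵥ X.mulVec a = a ⬝ᵥ Xᵀ.mulVec a := by
  simp only [dotProduct, Matrix.mulVec, Matrix.transpose_apply, Finset.mul_sum]
  rw [Finset.sum_comm]
  apply Finset.sum_congr rfl; intro j _; apply Finset.sum_congr rfl; intro k _; ring

lemma hBmul {m n : ℕ} (A : Matrix (Fin m) (Fin n) ℝ) (v : Fin n → ℂ) (i : Fin m) :
    (A.map (Complex.ofReal)).mulVec v i = ∑ j, ((A i j : ℝ) : ℂ) * v j := by
  simp [Matrix.mulVec, dotProduct, Matrix.map_apply]

/-- **Corollary 2.4 (complex conjugate phase retrieval of the complex range space).**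
Let `A` be a real `m × n` matrix of rank `n` with rows `aᵢ`.  The complex range space
`R_ℂ(A)` is complex conjugate phase retrieval iff there does not exist a real `n × n`
matrix `X` of rank at most `2` with `Xᵀ ≠ -X` and `aᵢᵀ X aᵢ = 0` for all `i`. -/
theorem stmt_3 {m n : ℕ} (A : Matrix (Fin m) (Fin n) ℝ) (hA : A.rank = n) :
    (∀ xf y : Fin n → ℂ,
        (∀ i, ‖(A.map (Complex.ofReal)).mulVec y i‖ =
          ‖(A.map (Complex.ofReal)).mulVec xf i‖) →
        ∃ z : ℂ, ‖z‖ = 1 ∧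
          ((A.map (Complex.ofReal)).mulVec y = z • (A.map (Complex.ofReal)).mulVec xf ∨
            (A.map (Complex.ofReal)).mulVec y = z • (A.map (Complex.ofReal)).mulVec (star xf))) ↔
      ¬ ∃ X : Matrix (Fin n) (Fin n) ℝ,
          X.rank ≤ 2 ∧ Xᵀ ≠ -X ∧ (∀ i, A i ⬝ᵥ X.mulVec (A i) = 0) := by
  constructor
  · -- phase retrieval implies no such X
    intro hPR
    rintro ⟨X, hrank, hsym, hconstr⟩
    obtain ⟨p, q, r, s, hX⟩ := decomp X hrank
    set xv : Fin n → ℂ :=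
      fun j => (((p j - q j)/2 : ℝ) : ℂ) + (((r j - s j)/2 : ℝ) : ℂ) * I with hxv
    set yv : Fin n → ℂ :=
      fun j => (((p j + q j)/2 : ℝ) : ℂ) + (((r j + s j)/2 : ℝ) : ℂ) * I with hyv
    have hxv' : ∀ j, xv j = (((p j - q j)/2 : ℝ) : ℂ) + (((r j - s j)/2 : ℝ) : ℂ) * I :=
      fun j => rfl
    have hyv' : ∀ j, yv j = (((p j + q j)/2 : ℝ) : ℂ) + (((r j + s j)/2 : ℝ) : ℂ) * I :=
      fun j => rfl
    have hsy : ∀ i, (A.map (Complex.ofReal)).mulVec yv i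
        = ∑ j, ((A i j : ℝ) : ℂ) * ((((p j + q j)/2 : ℝ) : ℂ) + (((r j + s j)/2 : ℝ) : ℂ) * I) :=
      fun i => by rw [hBmul]
    have hsx : ∀ i, (A.map (Complex.ofReal)).mulVec xv i
        = ∑ j, ((A i j : ℝ) : ℂ) * ((((p j - q j)/2 : ℝ) : ℂ) + (((r j - s j)/2 : ℝ) : ℂ) * I) :=
      fun i => by rw [hBmul]
    have hmeas : ∀ i, ‖(A.map (Complex.ofReal)).mulVec yv i‖
        = ‖(A.map (Complex.ofReal)).mulVec xv i‖ := by
      intro i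
      have h0 : A i ⬝ᵥ X.mulVec (A i) = 0 := hconstr i
      rw [quad p q r s (A i) X hX] at h0
      have hb := bridge p q r s (A i)
      have hns : normSq ((A.map (Complex.ofReal)).mulVec yv i)
          = normSq ((A.map (Complex.ofReal)).mulVec xv i) := by
        rw [hsy, hsx]
        linarith
      rw [Complex.norm_def, Complex.norm_def, hns]
    obtain ⟨z, hz, hcase⟩ := hPR xv yv hmeas
    have hinj := inj_of_rank A hA
    have hrel : yv = z • xv ∨ yv = z • star xv := by
      rcases hcase with hc | hc
      · left
        apply hinj
        show (A.map (Complex.ofReal)).mulVec yv = (A.map (Complex.ofReal)).mulVec (z • xv)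
        rw [Matrix.mulVec_smul]
        exact hc
      · right
        apply hinj
        show (A.map (Complex.ofReal)).mulVec yv = (A.map (Complex.ofReal)).mulVec (z • star xv)
        rw [Matrix.mulVec_smul]
        exact hc
    have hzz : z * (starRingEnd ℂ) z = 1 := by
      rw [Complex.mul_conj]
      norm_cast
      rw [← Complex.sq_norm, hz]
      norm_num
    have hyy : ∀ i j, (yv i * (starRingEnd ℂ) (yv j)).re = (xv i * (starRingEnd ℂ) (xv j)).re := by
      intro i j
      rcases hrel with hr | hr
      · rw [hr]
        simp only [Pi.smul_apply, smul_eq_mul, _root_.map_mul]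
        have e : z * xv i * ((starRingEnd ℂ) z * (starRingEnd ℂ) (xv j))
            = (z * (starRingEnd ℂ) z) * (xv i * (starRingEnd ℂ) (xv j)) := by ring
        rw [e, hzz, one_mul]
      · rw [hr]
        simp only [Pi.smul_apply, Pi.star_apply, smul_eq_mul, _root_.map_mul,
          Complex.star_def, Complex.conj_conj]
        have e : z * (starRingEnd ℂ) (xv i) * ((starRingEnd ℂ) z * xv j)
            = (z * (starRingEnd ℂ) z) * ((starRingEnd ℂ) (xv i) * xv j) := by ring
        rw [e, hzz, one_mul]
        rw [show (starRingEnd ℂ) (xv i) * xv j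
            = (starRingEnd ℂ) (xv i * (starRingEnd ℂ) (xv j)) by
          rw [_root_.map_mul, Complex.conj_conj]]
        simp
    apply hsym
    ext i j
    simp only [Matrix.transpose_apply, Matrix.neg_apply]
    have hs : X i j + X j i
        = 2 * ((yv i * (starRingEnd ℂ) (yv j)).re - (xv i * (starRingEnd ℂ) (xv j)).re) := by
      rw [hX i j, hX j i, hyv' i, hyv' j, hxv' i, hxv' j]
      exact sym_id (p i) (q i) (r i) (s i) (p j) (q j) (r j) (s j)
    rw [hyy i j] at hs
    have : X i j + X j i = 0 := by rw [hs]; ring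
    linarith
  · -- no such X implies phase retrieval
    intro hnX xf yv hmeas
    set p : Fin n → ℝ := fun j => (yv j + xf j).re with hp
    set q : Fin n → ℝ := fun j => (yv j - xf j).re with hq
    set r : Fin n → ℝ := fun j => (yv j + xf j).im with hr
    set s : Fin n → ℝ := fun j => (yv j - xf j).im with hs
    have hyv' : ∀ j, yv j = (((p j + q j)/2 : ℝ) : ℂ) + (((r j + s j)/2 : ℝ) : ℂ) * I := by
      intro j
      apply Complex.ext
      · simp [hp, hq, hr, hs]
      · simp [hp, hq, hr, hs]
    have hxf' : ∀ j, xf j = (((p j - q j)/2 : ℝ) : ℂ) + (((r j - s j)/2 : ℝ) : ℂ) * I := by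
      intro j
      apply Complex.ext
      · simp [hp, hq, hr, hs]
      · simp [hp, hq, hr, hs]
    set X : Matrix (Fin n) (Fin n) ℝ := Matrix.of fun i j => p i * q j + r i * s j with hXdef
    have hXapp : ∀ i j, X i j = p i * q j + r i * s j := fun i j => rfl
    have hsumy : ∀ a : Fin n → ℝ, ∑ j, (a j : ℂ) * yv j
        = ∑ j, (a j : ℂ) * ((((p j + q j)/2 : ℝ) : ℂ) + (((r j + s j)/2 : ℝ) : ℂ) * I) :=
      fun a => Finset.sum_congr rfl fun j _ => by rw [hyv' j]
    have hsumx : ∀ a : Fin n → ℝ, ∑ j, (a j : ℂ) * xf j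
        = ∑ j, (a j : ℂ) * ((((p j - q j)/2 : ℝ) : ℂ) + (((r j - s j)/2 : ℝ) : ℂ) * I) :=
      fun a => Finset.sum_congr rfl fun j _ => by rw [hxf' j]
    have hconstr : ∀ i, A i ⬝ᵥ X.mulVec (A i) = 0 := by
      intro i
      rw [quad p q r s (A i) X hXapp]
      have hb := bridge p q r s (A i)
      have hm : normSq (∑ j, ((A i j : ℝ) : ℂ) * yv j) = normSq (∑ j, ((A i j : ℝ) : ℂ) * xf j) := by
        have h1 := hmeas i
        rw [hBmul, hBmul] at h1
        rw [← Complex.sq_norm, ← Complex.sq_norm, h1]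
      rw [hsumy (A i), hsumx (A i)] at hm
      linarith
    have hX2 : Xᵀ = -X := by
      by_contra hne
      exact hnX ⟨X, rank_outer_le p q r s, hne, hconstr⟩
    have hall : ∀ a : Fin n → ℝ, normSq (∑ j, (a j : ℂ) * yv j) = normSq (∑ j, (a j : ℂ) * xf j) := by
      intro a
      have hq0 : a ⬝ᵥ X.mulVec a = 0 := by
        have h1 := dot_symm a X
        rw [hX2] at h1
        have h2 : a ⬝ᵥ (-X).mulVec a = -(a ⬝ᵥ X.mulVec a) := by
          simp [Matrix.neg_mulVec, dotProduct_neg]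
        rw [h2] at h1
        linarith
      rw [quad p q r s a X hXapp] at hq0
      have hb := bridge p q r s a
      rw [hsumy a, hsumx a]
      linarith
    obtain ⟨z, hz, hcase⟩ := core xf yv (by
      intro a
      have := hall a
      exact this)
    refine ⟨z, hz, ?_⟩
    rcases hcase with hc | hc
    · left; rw [hc, Matrix.mulVec_smul]
    · right; rw [hc, Matrix.mulVec_smul]
end

section
/- Let A be a real m×n matrix of rank n and let f = A·x_f ∈ R_ℂ(A) with x_f ∈ ℂⁿ. If f is complex conjugate phase retrieval in R_ℂ(A), then the real linear subspace Ω = span_ℝ{Re(x_f), Im(x_f)} ⊆ ℝⁿ is phase retrieval with respect to A, i.e. for all x, y ∈ Ω, if |Ax| = |Ay| entrywise then y = x or y = −x. -/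
open Complex Matrix

private lemma stmt6_inj {m n : ℕ} (A : Matrix (Fin m) (Fin n) ℝ) (hA : A.rank = n) :
    Function.Injective A.mulVec := by
  have hfd : Module.finrank ℝ (Fin n → ℝ) = n := by simp
  have h := LinearMap.finrank_range_add_finrank_ker A.mulVecLin
  rw [Matrix.rank] at hA
  rw [hA, hfd] at h
  have hker : Module.finrank ℝ (LinearMap.ker A.mulVecLin) = 0 := by omega
  have hbot : LinearMap.ker A.mulVecLin = ⊥ := Submodule.finrank_eq_zero.mp hker
  have hinj := LinearMap.ker_eq_bot.mp hbot
  intro x y hxy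
  exact hinj (by simpa [Matrix.mulVecLin_apply] using hxy)

private lemma stmt6_decomp {m n : ℕ} (A : Matrix (Fin m) (Fin n) ℝ) (v : Fin n → ℂ) (i : Fin m) :
    (A.map (Complex.ofReal)).mulVec v i
      = (A.mulVec (fun j => (v j).re) i : ℂ) + (A.mulVec (fun j => (v j).im) i : ℂ) * I := by
  apply Complex.ext <;>
  simp [Matrix.mulVec, dotProduct, Complex.re_sum, Complex.im_sum, Complex.mul_re,
    Complex.mul_im, Finset.sum_mul]

private lemma stmt6_star {m n : ℕ} (A : Matrix (Fin m) (Fin n) ℝ) (v : Fin n → ℂ) (i : Fin m) :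
    (A.map (Complex.ofReal)).mulVec (star v) i = star ((A.map (Complex.ofReal)).mulVec v i) := by
  simp only [Matrix.mulVec, dotProduct, Matrix.map_apply, Pi.star_apply]
  rw [show (star : ℂ → ℂ) = (starRingEnd ℂ) from rfl, map_sum]
  simp [_root_.map_mul, Complex.conj_ofReal]

private lemma stmt6_key (a b c d u v : ℝ) :
    ((((c:ℂ) - d*I)^2 - ((a:ℂ) - b*I)^2) * ((u:ℂ) + v*I)^2).re
      + (Complex.normSq ((c:ℂ) - d*I) - Complex.normSq ((a:ℂ) - b*I))
        * Complex.normSq ((u:ℂ) + v*I)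
    = 2*((c*u + d*v)^2 - (a*u + b*v)^2) := by
  simp [Complex.normSq_apply, Complex.mul_re, Complex.mul_im, pow_two]
  ring

private lemma stmt6_coeff {m n : ℕ} (A : Matrix (Fin m) (Fin n) ℝ)
    (hinj : Function.Injective A.mulVec) (α β : Fin n → ℝ)
    (hind : ∀ r₁ r₂ : ℝ, r₁ • α + r₂ • β = 0 → r₁ = 0 ∧ r₂ = 0)
    (c c' : ℂ) (h : ∀ i, c * (A.mulVec α i : ℂ) + c' * (A.mulVec β i : ℂ) = 0) :
    c = 0 ∧ c' = 0 := by
  have hre : ∀ i, c.re * A.mulVec α i + c'.re * A.mulVec β i = 0 := by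
    intro i; simpa using congrArg Complex.re (h i)
  have him : ∀ i, c.im * A.mulVec α i + c'.im * A.mulVec β i = 0 := by
    intro i; simpa using congrArg Complex.im (h i)
  have h1 : c.re • α + c'.re • β = 0 := by
    apply hinj
    rw [Matrix.mulVec_zero]
    funext i
    simpa [Matrix.mulVec_add, Matrix.mulVec_smul] using hre i
  have h2 : c.im • α + c'.im • β = 0 := by
    apply hinj
    rw [Matrix.mulVec_zero]
    funext i
    simpa [Matrix.mulVec_add, Matrix.mulVec_smul] using him i
  obtain ⟨e1, e2⟩ := hind _ _ h1
  obtain ⟨e3, e4⟩ := hind _ _ h2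
  constructor <;> [skip; skip] <;>
  · apply Complex.ext <;> simp [e1, e2, e3, e4]

private lemma stmt6_onedim {m n : ℕ} (A : Matrix (Fin m) (Fin n) ℝ)
    (hinj : Function.Injective A.mulVec) (v x y : Fin n → ℝ) (a c : ℝ)
    (hx : x = a • v) (hy : y = c • v)
    (h : ∀ i, |A.mulVec x i| = |A.mulVec y i|) : y = x ∨ y = -x := by
  subst hx; subst hy
  by_cases hv : A.mulVec v = 0
  · have hv0 : v = 0 := hinj (by rw [hv, Matrix.mulVec_zero])
    left; simp [hv0]
  · obtain ⟨i, hi⟩ := Function.ne_iff.mp hv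
    have h' := h i
    rw [Matrix.mulVec_smul, Matrix.mulVec_smul] at h'
    simp only [Pi.smul_apply, smul_eq_mul, abs_mul] at h'
    simp only [Pi.zero_apply] at hi
    have hac : |a| = |c| := mul_right_cancel₀ (abs_ne_zero.mpr hi) h'
    rcases abs_eq_abs.mp hac with h'' | h''
    · left; rw [h'']
    · right; rw [h'', neg_smul, neg_neg]

set_option maxHeartbeats 1000000 in
/-- **Corollary 2.7.**  Let `A` be a real `m × n` matrix of rank `n` and
`f = A xf ∈ R_ℂ(A)`.  If `f` is complex conjugate phase retrieval in `R_ℂ(A)`, then the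
real subspace `Ω = span {Re xf, Im xf} ⊆ ℝⁿ` is phase retrieval with respect to `A`. -/
theorem stmt_6 {m n : ℕ} (A : Matrix (Fin m) (Fin n) ℝ) (hA : A.rank = n)
    (xf : Fin n → ℂ)
    (hccpr : ∀ y : Fin n → ℂ,
        (∀ i, ‖(A.map (Complex.ofReal)).mulVec y i‖ =
          ‖(A.map (Complex.ofReal)).mulVec xf i‖) →
        ∃ z : ℂ, ‖z‖ = 1 ∧
          ((A.map (Complex.ofReal)).mulVec y = z • (A.map (Complex.ofReal)).mulVec xf ∨
            (A.map (Complex.ofReal)).mulVec y = z • (A.map (Complex.ofReal)).mulVec (star xf))) :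
    ∀ x ∈ Submodule.span ℝ ({fun j => (xf j).re, fun j => (xf j).im} : Set (Fin n → ℝ)),
      ∀ y ∈ Submodule.span ℝ ({fun j => (xf j).re, fun j => (xf j).im} : Set (Fin n → ℝ)),
        (∀ i, |A.mulVec x i| = |A.mulVec y i|) → y = x ∨ y = -x := by
  intro x hx y hy hxy
  have hinj : Function.Injective A.mulVec := stmt6_inj A hA
  set α : Fin n → ℝ := fun j => (xf j).re with hαdef
  set β : Fin n → ℝ := fun j => (xf j).im with hβdef
  obtain ⟨a, b, hx'⟩ := Submodule.mem_span_pair.mp hx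
  obtain ⟨c, d, hy'⟩ := Submodule.mem_span_pair.mp hy
  by_cases hind : ∀ r₁ r₂ : ℝ, r₁ • α + r₂ • β = 0 → r₁ = 0 ∧ r₂ = 0
  · -- independent case
    have hxv : ∀ i, A.mulVec x i = a * A.mulVec α i + b * A.mulVec β i := by
      intro i; rw [← hx', Matrix.mulVec_add, Matrix.mulVec_smul, Matrix.mulVec_smul]; simp
    have hyv : ∀ i, A.mulVec y i = c * A.mulVec α i + d * A.mulVec β i := by
      intro i; rw [← hy', Matrix.mulVec_add, Matrix.mulVec_smul, Matrix.mulVec_smul]; simp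
    have hsq : ∀ i, (a * A.mulVec α i + b * A.mulVec β i)^2
        = (c * A.mulVec α i + d * A.mulVec β i)^2 := by
      intro i
      rw [← hxv i, ← hyv i, ← _root_.sq_abs ((A.mulVec x) i),
        ← _root_.sq_abs ((A.mulVec y) i), hxy i]
    set s : Fin m → ℂ := fun i => (A.mulVec α i : ℂ) + (A.mulVec β i : ℂ) * I with hsdef
    have hs : ∀ i, (A.map (Complex.ofReal)).mulVec xf i = s i := by
      intro i; rw [hsdef]; rw [hαdef, hβdef]; exact stmt6_decomp A xf i
    have hsstar : ∀ i, (A.map (Complex.ofReal)).mulVec (star xf) i = star (s i) := by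
      intro i; rw [stmt6_star A xf i, hs i]
    set lam : ℂ := (a:ℂ) - b*I with hlam
    set mu : ℂ := (c:ℂ) - d*I with hmu
    set δ : ℂ := mu^2 - lam^2 with hδdef
    set r : ℝ := Complex.normSq mu - Complex.normSq lam with hrdef
    have hrel : ∀ i, (δ * (s i)^2).re + r * Complex.normSq (s i) = 0 := by
      intro i
      have hk := stmt6_key a b c d (A.mulVec α i) (A.mulVec β i)
      simp only [hδdef, hrdef, hlam, hmu, hsdef]
      rw [hk]
      have := hsq i
      linarith
    by_cases hδ : δ = 0
    · -- μ² = λ²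
      have hfac : (mu - lam) * (mu + lam) = 0 := by
        have h0 : mu^2 - lam^2 = 0 := hδ
        linear_combination h0
      rcases mul_eq_zero.mp hfac with h1 | h1
      · have heq : mu = lam := by linear_combination h1
        rw [hmu, hlam] at heq
        have hca : c = a := by
          have := congrArg Complex.re heq; simpa using this
        have hdb : d = b := by
          have := congrArg Complex.im heq
          simp at this
          linarith
        left; rw [← hx', ← hy', hca, hdb]
      · have heq : mu = -lam := by linear_combination h1
        rw [hmu, hlam] at heq
        have hca : c = -a := by
          have := congrArg Complex.re heq; simpa using this
        have hdb : d = -b := by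
          have := congrArg Complex.im heq
          simp at this
          linarith
        right; rw [← hx', ← hy', hca, hdb]
        module
    · -- δ ≠ 0 : derive contradiction via ccpr
      exfalso
      set aδ : ℝ := ‖δ‖ with haδ
      have haδpos : 0 < aδ := by rw [haδ]; exact norm_pos_iff.mpr hδ
      set N : ℝ := Complex.normSq δ with hN
      have hNa : aδ^2 = N := by rw [haδ, hN, Complex.sq_norm]
      set t : ℝ := 1 / (2*(|r| + aδ) + 1) with ht
      have hden : 0 < 2*(|r| + aδ) + 1 := by positivity
      have htpos : 0 < t := by rw [ht]; positivity
      have htden : t * (2*(|r| + aδ) + 1) = 1 := by rw [ht]; field_simp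
      have hsmall : 2*t*(|r| + aδ) < 1 := by nlinarith
      have hex : ∃ p : ℝ, 0 < p ∧ p^2*p^2 - (1 + 2*t*r)*(p^2) + t^2*N = 0 := by
        set D0 : ℝ := 1 + 2*t*r with hD0
        have hD0gt : 2*t*aδ < D0 := by rw [hD0]; nlinarith [neg_abs_le r]
        have h2ta : 0 ≤ 2*t*aδ := by positivity
        have hD0pos : 0 < D0 := lt_of_le_of_lt h2ta hD0gt
        set disc : ℝ := D0^2 - 4*t^2*N with hdisc
        have hNeq : 4*t^2*N = 4*t^2*aδ^2 := by rw [hNa]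
        have hdiscpos : 0 < disc := by
          rw [hdisc]
          nlinarith [mul_pos (sub_pos.mpr hD0gt) (show 0 < D0 + 2*t*aδ by linarith), hNeq]
        have hsq2 : Real.sqrt disc ^ 2 = disc := Real.sq_sqrt hdiscpos.le
        have hPpos : 0 < (D0 + Real.sqrt disc)/2 := by
          have := Real.sqrt_nonneg disc
          linarith
        refine ⟨Real.sqrt ((D0 + Real.sqrt disc)/2), Real.sqrt_pos.mpr hPpos, ?_⟩
        rw [Real.sq_sqrt hPpos.le]
        rw [hdisc] at hsq2
        linear_combination hsq2/4
      obtain ⟨p, hppos, hPP⟩ := hex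
      set q : ℂ := ((t:ℂ) * (starRingEnd ℂ) δ) / (p:ℂ) with hq
      have hpne : (p:ℂ) ≠ 0 := Complex.ofReal_ne_zero.mpr hppos.ne'
      have hq1 : (p:ℂ) * (starRingEnd ℂ) q = (t:ℂ) * δ := by
        rw [hq, map_div₀, _root_.map_mul]
        simp only [Complex.conj_ofReal, Complex.conj_conj]
        field_simp
      have hq2 : p^2 + Complex.normSq q = 1 + 2*t*r := by
        have hnq : Complex.normSq q = t^2*N / (p^2) := by
          rw [hq, map_div₀, _root_.map_mul]
          simp only [Complex.normSq_ofReal, Complex.normSq_conj, ← hN]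
          ring
        rw [hnq]
        have hp2ne : (p:ℝ)^2 ≠ 0 := by positivity
        field_simp
        linear_combination hPP
      set u : Fin n → ℂ := (p:ℂ) • xf + q • star xf with hu
      have hmvu : ∀ i, (A.map (Complex.ofReal)).mulVec u i = (p:ℂ) * s i + q * star (s i) := by
        intro i
        rw [hu, Matrix.mulVec_add, Matrix.mulVec_smul, Matrix.mulVec_smul]
        simp only [Pi.add_apply, Pi.smul_apply, smul_eq_mul]
        rw [hs i, hsstar i]
      have habs : ∀ i, ‖(A.map (Complex.ofReal)).mulVec u i‖
          = ‖(A.map (Complex.ofReal)).mulVec xf i‖ := by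
        intro i
        rw [hmvu i, hs i, Complex.norm_def, Complex.norm_def]
        congr 1
        rw [Complex.normSq_add]
        have e1 : Complex.normSq ((p:ℂ) * s i) = p^2 * Complex.normSq (s i) := by
          rw [_root_.map_mul, Complex.normSq_ofReal]; ring
        have e2 : Complex.normSq (q * star (s i)) = Complex.normSq q * Complex.normSq (s i) := by
          rw [_root_.map_mul]
          congr 1
          exact Complex.normSq_conj (s i)
        have e3 : (((p:ℂ) * s i) * (starRingEnd ℂ) (q * star (s i))).re
            = t * (δ * (s i)^2).re := by
          have h4 : ((p:ℂ) * s i) * (starRingEnd ℂ) (q * star (s i))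
              = (t:ℂ) * (δ * (s i)^2) := by
            rw [_root_.map_mul]
            have h5 : (starRingEnd ℂ) (star (s i)) = s i := by simp
            rw [h5]
            linear_combination (s i)^2 * hq1
          rw [h4]
          simp [Complex.mul_re]
        rw [e1, e2, e3]
        linear_combination Complex.normSq (s i) * hq2 + 2*t*(hrel i)
      obtain ⟨z, hz1, hz2⟩ := hccpr u habs
      rcases hz2 with heq | heq
      · -- u matches xf: forces q = 0, contradiction with δ ≠ 0
        have hco : ∀ i, ((p:ℂ) + q - z) * (A.mulVec α i : ℂ)
            + (((p:ℂ) - q - z) * I) * (A.mulVec β i : ℂ) = 0 := by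
          intro i
          have h0 := congrFun heq i
          rw [hmvu i] at h0
          simp only [Pi.smul_apply, smul_eq_mul] at h0
          rw [hs i] at h0
          have hst : star (s i) = (A.mulVec α i : ℂ) - (A.mulVec β i : ℂ) * I := by
            simp [hsdef, Complex.ext_iff]
          rw [hst] at h0
          simp only [hsdef] at h0
          linear_combination h0
        obtain ⟨hc1, hc2⟩ := stmt6_coeff A hinj α β hind _ _ hco
        have h2 : (p:ℂ) - q - z = 0 := by
          rcases mul_eq_zero.mp hc2 with h | h
          · exact h
          · exact absurd h Complex.I_ne_zero
        have hq0 : q = 0 := by linear_combination (hc1 - h2)/2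
        have h3 : (t:ℂ) * δ = 0 := by rw [← hq1, hq0, map_zero, mul_zero]
        rcases mul_eq_zero.mp h3 with h | h
        · exact htpos.ne' (by exact_mod_cast h)
        · exact hδ h
      · -- u matches star xf: forces p = 0, contradiction
        have hco : ∀ i, ((p:ℂ) + q - z) * (A.mulVec α i : ℂ)
            + (((p:ℂ) - q + z) * I) * (A.mulVec β i : ℂ) = 0 := by
          intro i
          have h0 := congrFun heq i
          rw [hmvu i] at h0
          simp only [Pi.smul_apply, smul_eq_mul] at h0
          rw [hsstar i] at h0
          have hst : star (s i) = (A.mulVec α i : ℂ) - (A.mulVec β i : ℂ) * I := by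
            simp [hsdef, Complex.ext_iff]
          rw [hst] at h0
          simp only [hsdef] at h0
          linear_combination h0
        obtain ⟨hc1, hc2⟩ := stmt6_coeff A hinj α β hind _ _ hco
        have h2 : (p:ℂ) - q + z = 0 := by
          rcases mul_eq_zero.mp hc2 with h | h
          · exact h
          · exact absurd h Complex.I_ne_zero
        have hp0 : (p:ℂ) = 0 := by linear_combination (hc1 + h2)/2
        exact hppos.ne' (by exact_mod_cast hp0)
  · -- dependent case
    push_neg at hind
    obtain ⟨r₁, r₂, hdep, hne⟩ := hind
    by_cases hr₂ : r₂ = 0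
    · have hr₁ : r₁ ≠ 0 := by tauto
      have hα0 : α = 0 := by
        have h0 : r₁ • α = 0 := by rw [hr₂] at hdep; simpa using hdep
        rcases smul_eq_zero.mp h0 with h | h
        · exact absurd h hr₁
        · exact h
      have hxβ : x = b • β := by rw [← hx', hα0]; simp
      have hyβ : y = d • β := by rw [← hy', hα0]; simp
      exact stmt6_onedim A hinj β x y b d hxβ hyβ hxy
    · have hβα : β = (-(r₁/r₂)) • α := by
        funext j
        have h0 := congrFun hdep j
        simp only [Pi.add_apply, Pi.smul_apply, smul_eq_mul, Pi.zero_apply] at h0 ⊢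
        field_simp
        linear_combination h0
      have hxα : x = (a + b * (-(r₁/r₂))) • α := by
        rw [← hx', hβα, smul_smul, ← add_smul]
      have hyα : y = (c + d * (-(r₁/r₂))) • α := by
        rw [← hy', hβα, smul_smul, ← add_smul]
      exact stmt6_onedim A hinj α x y _ _ hxα hyα hxy
end
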